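/- A retract of a strong d-space is a strong d-space. That is, if X is a strong d-space, Y is a T0 space, and there exist continuous maps f : X → Y and g : Y → X with f ∘ g = id_Y, then Y is a strong d-space. -/

import Mathlib

open Set Topology

universe u

variable {X : Type u}

/-- Specialization order: `x ≤ y` iff `x ∈ closure {y}`. -/
def specLE [TopologicalSpace X] (x y : X) : Prop := x ∈ closure ({y} : Set X)

/-- Directed subset w.r.t. the specialization order. -/
def dirOn [TopologicalSpace X] (D : Set X) : Prop :=
  D.Nonempty ∧ ∀ a ∈ D, ∀ b ∈ D, ∃ c ∈ D, specLE a c ∧ specLE b c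

/-- Downward closure w.r.t. the specialization order. -/
def dClo [TopologicalSpace X] (A : Set X) : Set X := {x | ∃ a ∈ A, specLE x a}

/-- Upward closure w.r.t. the specialization order. -/
def uClo [TopologicalSpace X] (A : Set X) : Set X := {x | ∃ a ∈ A, specLE a x}

/-- `x` is a supremum of `D` w.r.t. the specialization order. -/
def IsSupOf [TopologicalSpace X] (D : Set X) (x : X) : Prop :=
  (∀ d ∈ D, specLE d x) ∧ ∀ y, (∀ d ∈ D, specLE d y) → specLE x y

/-- A d-space: a T0 space in which every directed set (for the specialization order)
has a supremum, and every open set is inaccessible by directed suprema. -/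
def IsDSpace (X : Type u) [TopologicalSpace X] : Prop :=
  T0Space X ∧ (∀ D : Set X, dirOn D → ∃ x, IsSupOf D x) ∧
    ∀ D : Set X, dirOn D → ∀ x, IsSupOf D x →
      ∀ U : Set X, IsOpen U → x ∈ U → (D ∩ U).Nonempty

/-- A set is saturated if it is the intersection of the open sets containing it. -/
def IsSat [TopologicalSpace X] (A : Set X) : Prop :=
  A = ⋂₀ {U : Set X | IsOpen U ∧ A ⊆ U}

/-- The collection of nonempty compact saturated subsets. -/
def KSet (X : Type u) [TopologicalSpace X] : Set (Set X) :=
  {K | K.Nonempty ∧ IsCompact K ∧ IsSat K}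

/-- A filtered family of sets: nonempty, and every two members contain a common member. -/
def FiltFam [TopologicalSpace X] (𝒦 : Set (Set X)) : Prop :=
  𝒦.Nonempty ∧ ∀ K₁ ∈ 𝒦, ∀ K₂ ∈ 𝒦, ∃ K₃ ∈ 𝒦, K₃ ⊆ K₁ ∧ K₃ ⊆ K₂

/-- Well-filtered space. -/
def IsWF (X : Type u) [TopologicalSpace X] : Prop :=
  T0Space X ∧ ∀ 𝒦 : Set (Set X), 𝒦 ⊆ KSet X → FiltFam 𝒦 →
    ∀ U : Set X, IsOpen U → ⋂₀ 𝒦 ⊆ U → ∃ K ∈ 𝒦, K ⊆ U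

/-- Sober space: every irreducible closed subset is the closure of a unique point. -/
def IsSober (X : Type u) [TopologicalSpace X] : Prop :=
  ∀ A : Set X, IsIrreducible A → IsClosed A → ∃! x : X, A = closure {x}

/-- `V` is way below `U` in the lattice of open sets: every open cover of `U`
has a finite subfamily covering `V`. -/
def wayBelow [TopologicalSpace X] (V U : Set X) : Prop :=
  ∀ 𝒞 : Set (Set X), (∀ W ∈ 𝒞, IsOpen W) → U ⊆ ⋃₀ 𝒞 →
    ∃ 𝒟 ⊆ 𝒞, 𝒟.Finite ∧ V ⊆ ⋃₀ 𝒟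

/-- Core compact space. -/
def CoreCompact (X : Type u) [TopologicalSpace X] : Prop :=
  ∀ (x : X) (U : Set X), IsOpen U → x ∈ U →
    ∃ V : Set X, IsOpen V ∧ x ∈ V ∧ wayBelow V U

/-- The underlying type of the Smyth power space: nonempty compact saturated subsets. -/
abbrev KS (X : Type u) [TopologicalSpace X] : Type u :=
  {K : Set X // K.Nonempty ∧ IsCompact K ∧ IsSat K}

/-- The upper Vietoris topology on `KS X`, generated by the sets
`□U = {K | K ⊆ U}` for `U` open; this makes `KS X` the Smyth power space `P_S(X)`. -/
instance (X : Type u) [TopologicalSpace X] : TopologicalSpace (KS X) :=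
  TopologicalSpace.generateFrom
    {S | ∃ U : Set X, IsOpen U ∧ S = {K : KS X | (K : Set X) ⊆ U}}

/-- Rudin set: a nonempty closed set that is a minimal closed set meeting all
members of some filtered family of nonempty compact saturated sets. -/
def RudinSet [TopologicalSpace X] (A : Set X) : Prop :=
  IsClosed A ∧ A.Nonempty ∧ ∃ 𝒦 : Set (Set X), 𝒦 ⊆ KSet X ∧ FiltFam 𝒦 ∧
    (∀ K ∈ 𝒦, (K ∩ A).Nonempty) ∧
    ∀ B : Set X, IsClosed B → B ⊆ A → (∀ K ∈ 𝒦, (K ∩ B).Nonempty) → B = A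

/-- Well-filtered determined (WD) set. -/
def IsWDSet [TopologicalSpace X] (A : Set X) : Prop :=
  IsClosed A ∧ A.Nonempty ∧ ∀ (Y : Type u) [TopologicalSpace Y], IsWF Y →
    ∀ f : X → Y, Continuous f → ∃ y : Y, closure (f '' A) = closure {y}

/-- Rudin space: every irreducible closed set is a Rudin set. -/
def RudinSpace (X : Type u) [TopologicalSpace X] : Prop :=
  ∀ A : Set X, IsClosed A → IsIrreducible A → RudinSet A

/-- WD space: every irreducible closed set is a WD set. -/
def WDSpace (X : Type u) [TopologicalSpace X] : Prop :=
  ∀ A : Set X, IsClosed A → IsIrreducible A → IsWDSet A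

/-- DC space: every irreducible closed set is the closure of a directed set. -/
def DCSpace (X : Type u) [TopologicalSpace X] : Prop :=
  ∀ A : Set X, IsClosed A → IsIrreducible A → ∃ D : Set X, dirOn D ∧ A = closure D

/-- Strong d-space. -/
def IsStrongDSpace (X : Type u) [TopologicalSpace X] : Prop :=
  T0Space X ∧ ∀ D : Set X, dirOn D → ∀ (x : X) (U : Set X), IsOpen U →
    (⋂ d ∈ D, uClo {d} ∩ uClo {x}) ⊆ U → ∃ d ∈ D, uClo {d} ∩ uClo {x} ⊆ U

lemma specLE_map {X Y : Type*} [TopologicalSpace X] [TopologicalSpace Y]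
    {h : X → Y} (hh : Continuous h) {a b : X} (hab : specLE a b) :
    specLE (h a) (h b) := by
  have : h a ∈ h '' closure ({b} : Set X) := ⟨a, hab, rfl⟩
  have := (image_closure_subset_closure_image hh) this
  exact (by simpa using this : h a ∈ closure ({h b} : Set Y))

/-- a retract of a strong d-space is a strong d-space. -/
theorem stmt19 {X : Type*} {Y : Type*} [TopologicalSpace X] [TopologicalSpace Y]
    [T0Space Y] (hX : IsStrongDSpace X) (f : X → Y) (g : Y → X)
    (hf : Continuous f) (hg : Continuous g) (hfg : f ∘ g = id) :
    IsStrongDSpace Y := by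
  refine ⟨inferInstance, ?_⟩
  intro D hD y U hU hsub
  have hfg' : ∀ z : Y, f (g z) = z := fun z => congrFun hfg z
  -- image of D under g is directed
  have hgD : dirOn (g '' D) := by
    obtain ⟨⟨d0, hd0⟩, hdir⟩ := hD
    refine ⟨⟨g d0, d0, hd0, rfl⟩, ?_⟩
    rintro _ ⟨a, ha, rfl⟩ _ ⟨b, hb, rfl⟩
    obtain ⟨c, hc, hac, hbc⟩ := hdir a ha b hb
    exact ⟨g c, ⟨c, hc, rfl⟩, specLE_map hg hac, specLE_map hg hbc⟩
  have key : (⋂ d ∈ g '' D, uClo {d} ∩ uClo {g y}) ⊆ f ⁻¹' U := by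
    intro x hx
    have : f x ∈ ⋂ d ∈ D, uClo {d} ∩ uClo {y} := by
      refine mem_iInter₂.2 fun d hd => ?_
      have hx' := mem_iInter₂.1 hx (g d) ⟨d, hd, rfl⟩
      obtain ⟨⟨_, (h1 : _ ∈ ({g d} : Set X)), hgd⟩, ⟨_, (h2 : _ ∈ ({g y} : Set X)), hgy⟩⟩ := hx'
      rw [mem_singleton_iff] at h1 h2
      subst h1; subst h2
      refine ⟨⟨d, rfl, ?_⟩, ⟨y, rfl, ?_⟩⟩
      · have := specLE_map hf hgd; rwa [hfg'] at this
      · have := specLE_map hf hgy; rwa [hfg'] at this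
    exact hsub this
  obtain ⟨_, ⟨d, hd, rfl⟩, hdsub⟩ := hX.2 (g '' D) hgD (g y) (f ⁻¹' U) (hU.preimage hf) key
  refine ⟨d, hd, ?_⟩
  rintro z ⟨⟨d', hd', hdz⟩, ⟨y', hy', hyz⟩⟩
  rw [mem_singleton_iff] at hd' hy'
  rw [hd'] at hdz; rw [hy'] at hyz
  have : g z ∈ uClo {g d} ∩ uClo {g y} :=
    ⟨⟨g d, rfl, specLE_map hg hdz⟩, ⟨g y, rfl, specLE_map hg hyz⟩⟩
  have := hdsub this
  simpa [hfg'] using this
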